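/- Let X be a locally compact, Hausdorff, connected space, let ρ be a quasi-linear functional on C_c(X) (or on C₀(X)), and let μ = μ_ρ be the associated compact-finite topological measure. If K ⊆ X is compact and f, g ∈ C_c(X) have supp f, supp g ⊆ K, then: (i) if f, g ≥ 0 then |ρ(f) − ρ(g)| ≤ ‖f − g‖_∞ · μ(K); (ii) in general |ρ(f) − ρ(g)| ≤ 2‖f − g‖_∞ · μ(K); (iii) |ρ(f)| ≤ ‖f‖_∞ · μ(supp f). Consequently ρ is continuous on C_c(X) with respect to the topology of uniform convergence on compact sets. If moreover μ(X) < ∞, then |ρ(f)| ≤ ‖f‖_∞ · μ(X), |ρ(f) − ρ(g)| ≤ ‖f − g‖_∞ · μ(X) for f, g ≥ 0, and |ρ(f) − ρ(g)| ≤ 2‖f − g‖_∞ · μ(X) in general, so ρ is uniformly continuous. -/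

import Mathlib

open Set Filter Topology MeasureTheory
open scoped ENNReal BoundedContinuousFunction

universe u

/-- A topological measure on `X`: a set function on subsets of `X` (only its values on open
and closed sets matter), not identically `∞` on open/closed sets, satisfying (TM1)–(TM3). -/
structure TopMeasure (X : Type u) [TopologicalSpace X] where
  toFun : Set X → ℝ≥0∞
  not_all_top : ∃ A : Set X, (IsOpen A ∨ IsClosed A) ∧ toFun A ≠ ∞
  tm1 : ∀ A B : Set X, Disjoint A B → (IsOpen A ∨ IsCompact A) → (IsOpen B ∨ IsCompact B) →
      (IsOpen (A ∪ B) ∨ IsCompact (A ∪ B)) → toFun (A ∪ B) = toFun A + toFun B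
  tm2 : ∀ U : Set X, IsOpen U → toFun U = ⨆ K ∈ {K : Set X | IsCompact K ∧ K ⊆ U}, toFun K
  tm3 : ∀ F : Set X, IsClosed F → toFun F = ⨅ U ∈ {U : Set X | IsOpen U ∧ F ⊆ U}, toFun U

/-- `μ` is compact-finite. -/
def TopMeasure.CompactFinite {X : Type u} [TopologicalSpace X] (μ : TopMeasure X) : Prop :=
  ∀ K : Set X, IsCompact K → μ.toFun K ≠ ∞

/-- The set of compactly supported continuous functions, inside `C_b(X)`. -/
def CcS (X : Type u) [TopologicalSpace X] : Set (X →ᵇ ℝ) :=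
  {f | HasCompactSupport (f : X → ℝ)}

/-- The set of continuous functions vanishing at infinity, inside `C_b(X)`. -/
def C0S (X : Type u) [TopologicalSpace X] : Set (X →ᵇ ℝ) :=
  {f | Tendsto (f : X → ℝ) (cocompact X) (nhds 0)}

/-- `𝔅` is a (non-unital) subalgebra of `C_b(X)`. -/
def IsSubalgS {X : Type u} [TopologicalSpace X] (𝔅 : Set (X →ᵇ ℝ)) : Prop :=
  (∀ f g : X →ᵇ ℝ, f ∈ 𝔅 → g ∈ 𝔅 → f + g ∈ 𝔅) ∧
  (∀ f g : X →ᵇ ℝ, f ∈ 𝔅 → g ∈ 𝔅 → f * g ∈ 𝔅) ∧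
  (∀ (c : ℝ) (f : X →ᵇ ℝ), f ∈ 𝔅 → c • f ∈ 𝔅)

/-- The singly generated subalgebra `B(h)`: the smallest closed (in `𝔅`) subalgebra of `𝔅`
containing `h`. -/
def sgen {X : Type u} [TopologicalSpace X] (𝔅 : Set (X →ᵇ ℝ)) (h : X →ᵇ ℝ) :
    Set (X →ᵇ ℝ) :=
  ⋂₀ {S : Set (X →ᵇ ℝ) | S ⊆ 𝔅 ∧ h ∈ S ∧
      (∀ f g : X →ᵇ ℝ, f ∈ S → g ∈ S → f + g ∈ S) ∧
      (∀ f g : X →ᵇ ℝ, f ∈ S → g ∈ S → f * g ∈ S) ∧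
      (∀ (c : ℝ) (f : X →ᵇ ℝ), f ∈ S → c • f ∈ S) ∧
      IsClosed {x : ↥𝔅 | (x : X →ᵇ ℝ) ∈ S}}

/-- A signed quasi-linear functional on `𝔅` (QI1), (QI2). -/
structure SignedQLF {X : Type u} [TopologicalSpace X] (𝔅 : Set (X →ᵇ ℝ)) where
  toFun : (X →ᵇ ℝ) → ℝ
  smul_eq : ∀ (a : ℝ) (f : X →ᵇ ℝ), f ∈ 𝔅 → toFun (a • f) = a * toFun f
  add_eq : ∀ h ∈ 𝔅, ∀ f g : X →ᵇ ℝ, f ∈ sgen 𝔅 h → g ∈ sgen 𝔅 h →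
      toFun (f + g) = toFun f + toFun g

/-- A (positive) quasi-linear functional on `𝔅` (QI1)–(QI3). -/
structure QLF {X : Type u} [TopologicalSpace X] (𝔅 : Set (X →ᵇ ℝ)) extends SignedQLF 𝔅 where
  pos : ∀ f : X →ᵇ ℝ, f ∈ 𝔅 → 0 ≤ f → 0 ≤ toFun f

/-- `‖ρ‖ = sup {ρ(f) : f ∈ 𝔅, 0 ≤ f ≤ 1}`, as an extended real number. -/
noncomputable def qnorm {X : Type u} [TopologicalSpace X] {𝔅 : Set (X →ᵇ ℝ)} (ρ : QLF 𝔅) :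
    ℝ≥0∞ :=
  ⨆ f ∈ {f : X →ᵇ ℝ | f ∈ 𝔅 ∧ 0 ≤ f ∧ f ≤ 1}, ENNReal.ofReal (ρ.toFun f)

/-- `m` is the measure `m_f` on `ℝ` associated with a finite topological measure `μ` and
`f ∈ C₀(X)` (case (A)): `m(W) = μ(f⁻¹(W))` for every open `W ⊆ ℝ`. -/
def IsMfA {X : Type u} [TopologicalSpace X] (μ : TopMeasure X) (f : X →ᵇ ℝ)
    (m : Measure ℝ) : Prop :=
  ∀ W : Set ℝ, IsOpen W → m W = μ.toFun ((f : X → ℝ) ⁻¹' W)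

/-- `m` is the measure `m_f` on `ℝ` associated with a compact-finite topological measure `μ`
and `f ∈ C_c(X)` (case (B)): `m(W) = μ(f⁻¹(W \ {0}))` for every open `W ⊆ ℝ`. -/
def IsMfB {X : Type u} [TopologicalSpace X] (μ : TopMeasure X) (f : X →ᵇ ℝ)
    (m : Measure ℝ) : Prop :=
  ∀ W : Set ℝ, IsOpen W → m W = μ.toFun ((f : X → ℝ) ⁻¹' (W \ {0}))

/-- The support of a (Borel) measure on `ℝ`. -/
def msupp (m : Measure ℝ) : Set ℝ := {x : ℝ | ∀ U ∈ nhds x, 0 < m U}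

/-- The set function `μ_ρ` on open sets:
`μ_ρ(U) = sup {ρ(f) : f ∈ C_c(X), 0 ≤ f ≤ 1, supp f ⊆ U}`. -/
noncomputable def muO {X : Type u} [TopologicalSpace X] {𝔅 : Set (X →ᵇ ℝ)} (ρ : QLF 𝔅)
    (U : Set X) : ℝ≥0∞ :=
  ⨆ f ∈ {f : X →ᵇ ℝ | f ∈ CcS X ∧ 0 ≤ f ∧ f ≤ 1 ∧ tsupport (f : X → ℝ) ⊆ U},
    ENNReal.ofReal (ρ.toFun f)

/-- The set function `μ_ρ` on closed sets: `μ_ρ(F) = inf {μ_ρ(U) : U open, F ⊆ U}`. -/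
noncomputable def muC {X : Type u} [TopologicalSpace X] {𝔅 : Set (X →ᵇ ℝ)} (ρ : QLF 𝔅)
    (F : Set X) : ℝ≥0∞ :=
  ⨅ U ∈ {U : Set X | IsOpen U ∧ F ⊆ U}, muO ρ U

open Classical in
/-- The set function `μ_ρ`. -/
noncomputable def muR {X : Type u} [TopologicalSpace X] {𝔅 : Set (X →ᵇ ℝ)} (ρ : QLF 𝔅) :
    Set X → ℝ≥0∞ :=
  fun A => if IsOpen A then muO ρ A else muC ρ A

/-- `ρ = ρ_μ` on `C₀(X)` (case (A)): for every `f ∈ C₀(X)` and every measure `m_f`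
associated with `μ` and `f`, `ρ(f) = ∫_ℝ id dm_f`. -/
def ReprA {X : Type u} [TopologicalSpace X] {𝔅 : Set (X →ᵇ ℝ)} (μ : TopMeasure X)
    (ρ : QLF 𝔅) : Prop :=
  ∀ f ∈ C0S X, ∀ m : Measure ℝ, IsMfA μ f m → ρ.toFun f = ∫ t, t ∂m

/-- `ρ = ρ_μ` on `C_c(X)` (case (B)). -/
def ReprB {X : Type u} [TopologicalSpace X] {𝔅 : Set (X →ᵇ ℝ)} (μ : TopMeasure X)
    (ρ : QLF 𝔅) : Prop :=
  ∀ f ∈ CcS X, ∀ m : Measure ℝ, IsMfB μ f m → ρ.toFun f = ∫ t, t ∂m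

set_option linter.unusedSectionVars false

section Aux
variable {X : Type u} [TopologicalSpace X]

lemma bcf_le_iff {f g : X →ᵇ ℝ} : f ≤ g ↔ ∀ x, f x ≤ g x := Iff.rfl

lemma ccs_sub_c0s : CcS X ⊆ C0S X := by
  intro f hf
  have : (f : X → ℝ) =ᶠ[cocompact X] 0 := by
    filter_upwards [mem_cocompact.mpr ⟨tsupport (f : X → ℝ), hf, Subset.rfl⟩] with x hx
    exact image_eq_zero_of_notMem_tsupport hx
  exact (tendsto_congr' this).mpr tendsto_const_nhds

lemma CcS_add {f g : X →ᵇ ℝ} (hf : f ∈ CcS X) (hg : g ∈ CcS X) : f + g ∈ CcS X := by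
  have := hf.add hg; simpa [CcS] using this

lemma CcS_smul (c : ℝ) {f : X →ᵇ ℝ} (hf : f ∈ CcS X) : c • f ∈ CcS X := by
  have : HasCompactSupport ((fun t : ℝ => c * t) ∘ (f : X → ℝ)) :=
    hf.comp_left (by simp)
  simpa [CcS, Function.comp_def] using this

lemma CcS_zero : (0 : X →ᵇ ℝ) ∈ CcS X := by
  simp [CcS, HasCompactSupport, tsupport, Function.support]

variable {𝔅 : Set (X →ᵇ ℝ)} (h𝔅 : 𝔅 = CcS X ∨ 𝔅 = C0S X)

include h𝔅

lemma mem_B {f : X →ᵇ ℝ} (hf : f ∈ CcS X) : f ∈ 𝔅 := by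
  rcases h𝔅 with rfl | rfl
  · exact hf
  · exact ccs_sub_c0s hf

lemma B_add : ∀ f g : X →ᵇ ℝ, f ∈ 𝔅 → g ∈ 𝔅 → f + g ∈ 𝔅 := by
  rcases h𝔅 with rfl | rfl
  · exact fun f g hf hg => CcS_add hf hg
  · intro f g hf hg
    have := (hf : Tendsto _ _ _).add hg
    rw [add_zero] at this; exact this

lemma B_mul : ∀ f g : X →ᵇ ℝ, f ∈ 𝔅 → g ∈ 𝔅 → f * g ∈ 𝔅 := by
  rcases h𝔅 with rfl | rfl
  · intro f g hf hg
    have := (hf : HasCompactSupport _).mul_right (f := (f : X → ℝ)) (f' := (g : X → ℝ))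
    simpa [CcS] using this
  · intro f g hf hg
    have hb : ∀ x, ‖(f : X → ℝ) x * g x‖ ≤ ‖f‖ * ‖g x‖ := by
      intro x
      rw [norm_mul]
      exact mul_le_mul_of_nonneg_right (f.norm_coe_le_norm x) (norm_nonneg _)
    have hg' : Tendsto (fun x => ‖f‖ * ‖(g : X → ℝ) x‖) (cocompact X) (nhds 0) := by
      have : Tendsto (fun x => ‖(g : X → ℝ) x‖) (cocompact X) (nhds 0) := by
        simpa using (hg : Tendsto _ _ _).norm
      simpa using this.const_mul ‖f‖
    exact squeeze_zero_norm hb hg'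

lemma B_smul : ∀ (c : ℝ) (f : X →ᵇ ℝ), f ∈ 𝔅 → c • f ∈ 𝔅 := by
  rcases h𝔅 with rfl | rfl
  · exact fun c f hf => CcS_smul c hf
  · intro c f hf
    have := (hf : Tendsto _ _ _).const_mul c
    simpa [C0S, smul_eq_mul] using this

lemma B_zero : (0 : X →ᵇ ℝ) ∈ 𝔅 := mem_B h𝔅 CcS_zero

end Aux

section Sgen
variable {X : Type u} [TopologicalSpace X]
variable {𝔅 : Set (X →ᵇ ℝ)} (h𝔅 : 𝔅 = CcS X ∨ 𝔅 = C0S X)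

/-- The collection whose intersection defines `sgen`. -/
def SgenColl (𝔅 : Set (X →ᵇ ℝ)) (h : X →ᵇ ℝ) : Set (Set (X →ᵇ ℝ)) :=
  {S : Set (X →ᵇ ℝ) | S ⊆ 𝔅 ∧ h ∈ S ∧
      (∀ f g : X →ᵇ ℝ, f ∈ S → g ∈ S → f + g ∈ S) ∧
      (∀ f g : X →ᵇ ℝ, f ∈ S → g ∈ S → f * g ∈ S) ∧
      (∀ (c : ℝ) (f : X →ᵇ ℝ), f ∈ S → c • f ∈ S) ∧
      IsClosed {x : ↥𝔅 | (x : X →ᵇ ℝ) ∈ S}}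

lemma sgen_eq (h : X →ᵇ ℝ) : sgen 𝔅 h = ⋂₀ SgenColl 𝔅 h := rfl

include h𝔅

lemma B_mem_coll {h : X →ᵇ ℝ} (hh : h ∈ 𝔅) : 𝔅 ∈ SgenColl 𝔅 h :=
  ⟨Subset.rfl, hh, B_add h𝔅, B_mul h𝔅, B_smul h𝔅, by
    have : {x : ↥𝔅 | (x : X →ᵇ ℝ) ∈ 𝔅} = univ := by
      ext x; simp [x.2]
    rw [this]; exact isClosed_univ⟩

lemma sgen_sub_B {h : X →ᵇ ℝ} (hh : h ∈ 𝔅) : sgen 𝔅 h ⊆ 𝔅 :=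
  sInter_subset_of_mem (B_mem_coll h𝔅 hh)

omit h𝔅

lemma self_mem_sgen (h : X →ᵇ ℝ) : h ∈ sgen 𝔅 h :=
  fun _S hS => hS.2.1

lemma sgen_add {h f g : X →ᵇ ℝ} (hf : f ∈ sgen 𝔅 h) (hg : g ∈ sgen 𝔅 h) :
    f + g ∈ sgen 𝔅 h :=
  fun S hS => hS.2.2.1 f g (hf S hS) (hg S hS)

lemma sgen_mul {h f g : X →ᵇ ℝ} (hf : f ∈ sgen 𝔅 h) (hg : g ∈ sgen 𝔅 h) :
    f * g ∈ sgen 𝔅 h :=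
  fun S hS => hS.2.2.2.1 f g (hf S hS) (hg S hS)

lemma sgen_smul {h f : X →ᵇ ℝ} (c : ℝ) (hf : f ∈ sgen 𝔅 h) :
    c • f ∈ sgen 𝔅 h :=
  fun S hS => hS.2.2.2.2.1 c f (hf S hS)

lemma sgen_zero (h : X →ᵇ ℝ) : (0 : X →ᵇ ℝ) ∈ sgen 𝔅 h := by
  have := sgen_smul (𝔅 := 𝔅) (h := h) (0 : ℝ) (self_mem_sgen h)
  simpa using this

lemma sgen_neg {h f : X →ᵇ ℝ} (hf : f ∈ sgen 𝔅 h) : -f ∈ sgen 𝔅 h := by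
  have := sgen_smul (h := h) (-1 : ℝ) hf
  rwa [show ((-1:ℝ) • f) = -f by ext x; simp] at this

lemma sgen_sub {h f g : X →ᵇ ℝ} (hf : f ∈ sgen 𝔅 h) (hg : g ∈ sgen 𝔅 h) :
    f - g ∈ sgen 𝔅 h := by
  have := sgen_add hf (sgen_neg hg)
  simpa [sub_eq_add_neg] using this

lemma sgen_pow {h : X →ᵇ ℝ} (k : ℕ) (hk : 1 ≤ k) : h ^ k ∈ sgen 𝔅 h := by
  induction k with
  | zero => omega
  | succ n ih =>
    rcases Nat.eq_or_lt_of_le hk with h1 | h1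
    · simpa [← h1] using self_mem_sgen (𝔅 := 𝔅) h
    · have hn : 1 ≤ n := by omega
      have := sgen_mul (ih hn) (self_mem_sgen (𝔅 := 𝔅) h)
      simpa [pow_succ] using this

lemma sgen_sum {h : X →ᵇ ℝ} {n : ℕ} {F : ℕ → X →ᵇ ℝ}
    (hF : ∀ k < n, F k ∈ sgen 𝔅 h) : (∑ k ∈ Finset.range n, F k) ∈ sgen 𝔅 h := by
  induction n with
  | zero => simpa using sgen_zero (𝔅 := 𝔅) h
  | succ m ih =>
    rw [Finset.sum_range_succ]
    exact sgen_add (ih fun k hk => hF k (by omega)) (hF m (by omega))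

lemma sgen_isClosed (h : X →ᵇ ℝ) :
    IsClosed {x : ↥𝔅 | (x : X →ᵇ ℝ) ∈ sgen 𝔅 h} := by
  have : {x : ↥𝔅 | (x : X →ᵇ ℝ) ∈ sgen 𝔅 h} =
      ⋂ S ∈ SgenColl 𝔅 h, {x : ↥𝔅 | (x : X →ᵇ ℝ) ∈ S} := by
    ext x; simp [sgen_eq, mem_sInter]
  rw [this]
  exact isClosed_biInter fun S hS => hS.2.2.2.2.2

end Sgen

section Piece
variable {X : Type u} [TopologicalSpace X]

/-- The basic piecewise-linear function `t ↦ min (max ((t-a)*s) 0) b`. -/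
def pieceFun (a s b : ℝ) : ℝ → ℝ := fun t => min (max ((t - a) * s) 0) b

lemma pieceFun_lip (a s b : ℝ) : LipschitzWith (Real.nnabs s) (pieceFun a s b) := by
  apply LipschitzWith.of_dist_le_mul
  intro x y
  simp only [Real.dist_eq, pieceFun]
  calc |min (max ((x - a) * s) 0) b - min (max ((y - a) * s) 0) b|
      ≤ max |max ((x - a) * s) 0 - max ((y - a) * s) 0| |b - b| := abs_min_sub_min_le_max _ _ _ _
    _ ≤ |(x - a) * s - (y - a) * s| := by
        rw [sub_self, abs_zero]
        exact max_le (abs_max_sub_max_le_abs _ _ _) (abs_nonneg _)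
    _ = |s| * |x - y| := by rw [← sub_mul, abs_mul, mul_comm]; ring_nf
    _ = ↑(Real.nnabs s) * |x - y| := by simp

/-- Post-composition of a bounded continuous function with a piecewise-linear clamp. -/
noncomputable def piece (a s b : ℝ) (f : X →ᵇ ℝ) : X →ᵇ ℝ :=
  BoundedContinuousFunction.comp (pieceFun a s b) (pieceFun_lip a s b) f

@[simp] lemma piece_apply (a s b : ℝ) (f : X →ᵇ ℝ) (x : X) :
    piece a s b f x = min (max ((f x - a) * s) 0) b := rfl

lemma piece_nonneg {b : ℝ} (hb : 0 ≤ b) (a s : ℝ) (f : X →ᵇ ℝ) : 0 ≤ piece a s b f := by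
  intro x
  simp only [piece_apply]
  exact le_min (le_max_right _ _) hb

lemma piece_le (a s b : ℝ) (f : X →ᵇ ℝ) (x : X) : piece a s b f x ≤ b := min_le_right _ _

lemma piece_support_subset {a s b : ℝ} (h0 : pieceFun a s b 0 = 0) (f : X →ᵇ ℝ) :
    tsupport (piece a s b f : X → ℝ) ⊆ tsupport (f : X → ℝ) := by
  apply closure_mono
  intro x hx
  simp only [Function.mem_support] at hx ⊢
  intro hfx
  apply hx
  show pieceFun a s b (f x) = 0
  rw [hfx, h0]

lemma piece_mem_CcS {a s b : ℝ} (h0 : pieceFun a s b 0 = 0) {f : X →ᵇ ℝ}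
    (hf : f ∈ CcS X) : piece a s b f ∈ CcS X := by
  have : HasCompactSupport (pieceFun a s b ∘ (f : X → ℝ)) := hf.comp_left h0
  exact this

end Piece

section Rho
variable {X : Type u} [TopologicalSpace X]
variable {𝔅 : Set (X →ᵇ ℝ)} (h𝔅 : 𝔅 = CcS X ∨ 𝔅 = C0S X) (ρ : QLF 𝔅)

include h𝔅

lemma rho_zero : ρ.toFun 0 = 0 := by
  have := ρ.smul_eq 0 0 (B_zero h𝔅)
  simpa using this

lemma rho_nonneg {f : X →ᵇ ℝ} (hf : f ∈ 𝔅) (h0 : 0 ≤ f) : 0 ≤ ρ.toFun f :=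
  ρ.pos f hf h0

lemma rho_mono_sgen {h f g : X →ᵇ ℝ} (hh : h ∈ 𝔅) (hf : f ∈ sgen 𝔅 h)
    (hg : g ∈ sgen 𝔅 h) (hle : f ≤ g) : ρ.toFun f ≤ ρ.toFun g := by
  have hsub : g - f ∈ sgen 𝔅 h := sgen_sub hg hf
  have h1 : ρ.toFun (f + (g - f)) = ρ.toFun f + ρ.toFun (g - f) :=
    ρ.add_eq h hh f (g - f) hf hsub
  have h2 : f + (g - f) = g := by ring
  rw [h2] at h1
  have h3 : 0 ≤ ρ.toFun (g - f) :=
    ρ.pos _ (sgen_sub_B h𝔅 hh hsub) (by intro x; simpa using hle x)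
  linarith

lemma rho_sum_sgen {h : X →ᵇ ℝ} (hh : h ∈ 𝔅) {F : ℕ → X →ᵇ ℝ} {n : ℕ}
    (hF : ∀ k < n, F k ∈ sgen 𝔅 h) :
    ρ.toFun (∑ k ∈ Finset.range n, F k) = ∑ k ∈ Finset.range n, ρ.toFun (F k) := by
  induction n with
  | zero => simpa using rho_zero h𝔅 ρ
  | succ m ih =>
    rw [Finset.sum_range_succ, Finset.sum_range_succ,
      ρ.add_eq h hh _ _ (sgen_sum fun k hk => hF k (by omega)) (hF m (by omega)),
      ih fun k hk => hF k (by omega)]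

/-- Weierstrass: continuous functions of `h` vanishing at `0` belong to `sgen 𝔅 h`. -/
lemma comp_mem_sgen {h F : X →ᵇ ℝ} (hh : h ∈ 𝔅) (hF : F ∈ 𝔅)
    {φ : ℝ → ℝ} (hφ : ContinuousOn φ (Icc (-‖h‖) ‖h‖)) (hφ0 : φ 0 = 0)
    (heq : ∀ x, F x = φ (h x)) : F ∈ sgen 𝔅 h := by
  -- Approximate φ by polynomials with zero constant term.
  have key : ∀ ε : ℝ, 0 < ε → ∃ G : X →ᵇ ℝ, G ∈ sgen 𝔅 h ∧ ‖G - F‖ ≤ 2 * ε := by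
    intro ε hε
    obtain ⟨p, hp⟩ := exists_polynomial_near_of_continuousOn (-‖h‖) ‖h‖ φ hφ ε hε
    have h0mem : (0:ℝ) ∈ Icc (-‖h‖) ‖h‖ := by
      constructor <;> simp [norm_nonneg, neg_nonpos]
    set q : Polynomial ℝ := p - Polynomial.C (Polynomial.eval 0 p) with hq
    have hq0 : q.coeff 0 = 0 := by
      simp [hq, Polynomial.coeff_sub, Polynomial.coeff_C_zero, Polynomial.coeff_zero_eq_eval_zero]
    have hqev : ∀ t, q.eval t = p.eval t - p.eval 0 := by
      intro t; simp [hq]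
    have hqapprox : ∀ t ∈ Icc (-‖h‖) ‖h‖, |q.eval t - φ t| ≤ 2 * ε := by
      intro t ht
      have h1 := hp t ht
      have h2 := hp 0 h0mem
      rw [hφ0, sub_zero] at h2
      rw [hqev]
      calc |p.eval t - p.eval 0 - φ t| = |(p.eval t - φ t) - p.eval 0| := by ring_nf
        _ ≤ |p.eval t - φ t| + |p.eval 0| := abs_sub _ _
        _ ≤ 2 * ε := by linarith
    -- the polynomial applied to h
    set G : X →ᵇ ℝ := ∑ k ∈ Finset.range (q.natDegree + 1), q.coeff k • h ^ k with hG
    have hGmem : G ∈ sgen 𝔅 h := by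
      apply sgen_sum
      intro k hk
      rcases Nat.eq_zero_or_pos k with rfl | hkpos
      · rw [hq0, zero_smul]; exact sgen_zero h
      · exact sgen_smul _ (sgen_pow k hkpos)
    have hGapp : ∀ x : X, G x = q.eval (h x) := by
      intro x
      rw [Polynomial.eval_eq_sum_range]
      simp [hG]
    refine ⟨G, hGmem, ?_⟩
    rw [BoundedContinuousFunction.norm_le (by positivity)]
    intro x
    have hx : h x ∈ Icc (-‖h‖) ‖h‖ := by
      have := h.norm_coe_le_norm x
      rw [Real.norm_eq_abs, abs_le] at this
      exact this
    simp only [BoundedContinuousFunction.coe_sub, Pi.sub_apply, Real.norm_eq_abs]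
    rw [hGapp, heq]
    exact hqapprox _ hx
  -- now use closedness of sgen
  have hseq : ∀ n : ℕ, ∃ G : X →ᵇ ℝ, G ∈ sgen 𝔅 h ∧ ‖G - F‖ ≤ 2 / (n + 1) := by
    intro n
    obtain ⟨G, hG1, hG2⟩ := key (1 / (n + 1)) (by positivity)
    exact ⟨G, hG1, by rw [mul_one_div] at hG2; exact hG2⟩
  choose G hG1 hG2 using hseq
  have hGB : ∀ n, G n ∈ 𝔅 := fun n => sgen_sub_B h𝔅 hh (hG1 n)
  set u : ℕ → ↥𝔅 := fun n => ⟨G n, hGB n⟩ with hu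
  have htend : Tendsto u atTop (nhds (⟨F, hF⟩ : ↥𝔅)) := by
    rw [tendsto_subtype_rng]
    rw [tendsto_iff_norm_sub_tendsto_zero]
    have hlim : Tendsto (fun n : ℕ => 2 / ((n : ℝ) + 1)) atTop (nhds 0) := by
      have h1 : Tendsto (fun n : ℕ => (n : ℝ) + 1) atTop atTop :=
        tendsto_atTop_add_const_right _ 1 (tendsto_natCast_atTop_atTop (R := ℝ))
      exact Tendsto.div_atTop tendsto_const_nhds h1
    exact squeeze_zero (fun n => norm_nonneg _) hG2 hlim
  have := (sgen_isClosed (𝔅 := 𝔅) h).mem_of_tendsto htend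
    (Filter.Eventually.of_forall fun n => hG1 n)
  exact this

end Rho

section Mu
variable {X : Type u} [TopologicalSpace X]
variable {𝔅 : Set (X →ᵇ ℝ)} (h𝔅 : 𝔅 = CcS X ∨ 𝔅 = C0S X) (ρ : QLF 𝔅)

include h𝔅

/-- Key comparison trick: if `g = 1` wherever `f ≠ 0`, then `ρ f ≤ ρ g`. -/
lemma rho_le_of_eqone {f g : X →ᵇ ℝ} (hf : f ∈ CcS X) (hg : g ∈ CcS X)
    (hf0 : 0 ≤ f) (hf1 : f ≤ 1) (hg0 : 0 ≤ g) (hg1 : g ≤ 1)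
    (hfg : ∀ x, f x ≠ 0 → g x = 1) : ρ.toFun f ≤ ρ.toFun g := by
  have hf0' : ∀ x, 0 ≤ f x := fun x => hf0 x
  have hf1' : ∀ x, f x ≤ 1 := fun x => hf1 x
  have hg0' : ∀ x, 0 ≤ g x := fun x => hg0 x
  have hg1' : ∀ x, g x ≤ 1 := fun x => hg1 x
  have e1 : ∀ a b : ℝ, 0 ≤ a → 0 ≤ b → b ≤ 1 → (a = 0 ∨ b = 1) →
      pieceFun 0 1 1 (a + b) = b := by
    intro a b ha hb hb1 hab
    unfold pieceFun
    rcases hab with rfl | rfl <;> rw [min_def, max_def] <;> split_ifs <;> linarith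
  have e2 : ∀ a b : ℝ, 0 ≤ a → a ≤ 1 → 0 ≤ b → b ≤ 1 → (a = 0 ∨ b = 1) →
      pieceFun 1 1 1 (a + b) = a := by
    intro a b ha ha1 hb hb1 hab
    unfold pieceFun
    rcases hab with rfl | rfl <;> rw [min_def, max_def] <;> split_ifs <;> linarith
  set h : X →ᵇ ℝ := f + g with hh
  have hhB : h ∈ 𝔅 := mem_B h𝔅 (CcS_add hf hg)
  have happ : ∀ x, h x = f x + g x := fun x => rfl
  have halt : ∀ x, f x = 0 ∨ g x = 1 := by
    intro x
    rcases eq_or_ne (f x) 0 with h1 | h1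
    · exact Or.inl h1
    · exact Or.inr (hfg x h1)
  have hgmem : g ∈ sgen 𝔅 h := by
    apply comp_mem_sgen h𝔅 hhB (mem_B h𝔅 hg)
      ((pieceFun_lip 0 1 1).continuous.continuousOn)
      (by unfold pieceFun; norm_num)
    intro x
    rw [happ, e1 _ _ (hf0' x) (hg0' x) (hg1' x) (halt x)]
  have hfmem : f ∈ sgen 𝔅 h := by
    apply comp_mem_sgen h𝔅 hhB (mem_B h𝔅 hf)
      ((pieceFun_lip 1 1 1).continuous.continuousOn)
      (by unfold pieceFun; norm_num)
    intro x
    rw [happ, e2 _ _ (hf0' x) (hf1' x) (hg0' x) (hg1' x) (halt x)]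
  apply rho_mono_sgen h𝔅 ρ hhB hfmem hgmem
  intro x
  show f x ≤ g x
  rcases halt x with h1 | h1
  · rw [h1]; exact hg0' x
  · rw [h1]; exact hf1' x

omit h𝔅

lemma le_muO {f : X →ᵇ ℝ} {U : Set X} (hf : f ∈ CcS X) (hf0 : 0 ≤ f) (hf1 : f ≤ 1)
    (hsupp : tsupport (f : X → ℝ) ⊆ U) :
    ENNReal.ofReal (ρ.toFun f) ≤ muO ρ U := by
  rw [muO]
  exact le_biSup (fun g => ENNReal.ofReal (ρ.toFun g)) ⟨hf, hf0, hf1, hsupp⟩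

lemma muO_mono {U V : Set X} (hUV : U ⊆ V) : muO ρ U ≤ muO ρ V := by
  apply iSup₂_le
  intro f hf
  exact le_muO ρ hf.1 hf.2.1 hf.2.2.1 (hf.2.2.2.trans hUV)

lemma muC_le_muO {K U : Set X} (hU : IsOpen U) (hKU : K ⊆ U) : muC ρ K ≤ muO ρ U :=
  iInf₂_le U ⟨hU, hKU⟩

lemma le_muC {K : Set X} {M : ℝ≥0∞} (h : ∀ U : Set X, IsOpen U → K ⊆ U → M ≤ muO ρ U) :
    M ≤ muC ρ K :=
  le_iInf₂ fun U hU => h U hU.1 hU.2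

lemma muC_mono {K L : Set X} (hKL : K ⊆ L) : muC ρ K ≤ muC ρ L :=
  le_muC ρ fun U hU hLU => muC_le_muO ρ hU (hKL.trans hLU)

include h𝔅

lemma muO_comparison {g : X →ᵇ ℝ} {U : Set X} (hg : g ∈ CcS X) (hg0 : 0 ≤ g)
    (hg1 : g ≤ 1) (hU1 : ∀ x ∈ U, g x = 1) :
    muO ρ U ≤ ENNReal.ofReal (ρ.toFun g) := by
  apply iSup₂_le
  intro f hf
  apply ENNReal.ofReal_le_ofReal
  apply rho_le_of_eqone h𝔅 ρ hf.1 hg hf.2.1 hf.2.2.1 hg0 hg1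
  intro x hx
  exact hU1 x (hf.2.2.2 (subset_closure (Function.mem_support.mpr hx)))

end Mu

section MuLC
variable {X : Type u} [TopologicalSpace X] [LocallyCompactSpace X] [T2Space X]
variable {𝔅 : Set (X →ᵇ ℝ)} (h𝔅 : 𝔅 = CcS X ∨ 𝔅 = C0S X) (ρ : QLF 𝔅)

lemma exists_bump {K : Set X} (hK : IsCompact K) :
    ∃ (g : X →ᵇ ℝ) (U : Set X), g ∈ CcS X ∧ 0 ≤ g ∧ g ≤ 1 ∧ IsOpen U ∧ K ⊆ U ∧
      ∀ x ∈ U, g x = 1 := by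
  obtain ⟨K', hK', hKK'⟩ := exists_compact_superset hK
  obtain ⟨f, hf1, -, hfc, hf01⟩ :=
    exists_continuous_one_zero_of_isCompact hK' isClosed_empty (disjoint_empty _)
  refine ⟨BoundedContinuousFunction.ofNormedAddCommGroup f f.continuous 1
    (fun x => by rw [Real.norm_eq_abs, abs_le]; constructor <;> [linarith [(hf01 x).1]; exact (hf01 x).2]),
    interior K', hfc, fun x => (hf01 x).1, fun x => (hf01 x).2, isOpen_interior, hKK', ?_⟩
  intro x hx
  exact hf1 (interior_subset hx)

include h𝔅

lemma muC_lt_top {K : Set X} (hK : IsCompact K) : muC ρ K ≠ ∞ := by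
  obtain ⟨g, U, hg, hg0, hg1, hUo, hKU, hU1⟩ := exists_bump hK
  have h1 : muC ρ K ≤ ENNReal.ofReal (ρ.toFun g) :=
    (muC_le_muO ρ hUo hKU).trans (muO_comparison h𝔅 ρ hg hg0 hg1 hU1)
  exact (h1.trans_lt ENNReal.ofReal_lt_top).ne

lemma muO_lt_top {U : Set X} (hU : IsCompact (closure U)) : muO ρ U ≠ ∞ := by
  obtain ⟨g, V, hg, hg0, hg1, hVo, hUV, hV1⟩ := exists_bump hU
  have h1 : muO ρ U ≤ ENNReal.ofReal (ρ.toFun g) :=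
    muO_comparison h𝔅 ρ hg hg0 hg1 fun x hx => hV1 x (hUV (subset_closure hx))
  exact (h1.trans_lt ENNReal.ofReal_lt_top).ne

/-- Upper bound: a nonnegative function bounded by `c` and supported in a compact `C`
has `ρ`-value at most `c · μ(C)`. -/
lemma rho_le_muC_mul {ℓ : X →ᵇ ℝ} {C : Set X} {c : ℝ} (hℓ : ℓ ∈ CcS X) (h0 : 0 ≤ ℓ)
    (hc : 0 < c) (hlc : ∀ x, ℓ x ≤ c) (hC : IsCompact C)
    (hsupp : tsupport (ℓ : X → ℝ) ⊆ C) :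
    ρ.toFun ℓ ≤ c * (muC ρ C).toReal := by
  set d : X →ᵇ ℝ := (1/c) • ℓ with hd
  have hdc : d ∈ CcS X := CcS_smul _ hℓ
  have hd0 : 0 ≤ d := by
    intro x
    show (0:ℝ) ≤ (1/c) * ℓ x
    exact mul_nonneg (by positivity) (h0 x)
  have hd1 : d ≤ 1 := by
    intro x
    show (1/c) * ℓ x ≤ 1
    rw [div_mul_eq_mul_div, one_mul, div_le_one hc]
    exact hlc x
  have hdsupp : tsupport (d : X → ℝ) ⊆ C := by
    refine (closure_mono ?_).trans hsupp
    intro x hx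
    simp only [Function.mem_support] at hx ⊢
    intro h'
    exact hx (by show (1/c) * ℓ x = 0; rw [h', mul_zero])
  have h2 : ENNReal.ofReal (ρ.toFun d) ≤ muC ρ C :=
    le_muC ρ fun U hUo hCU => le_muO ρ hdc hd0 hd1 (hdsupp.trans hCU)
  have h3 : ρ.toFun d = (1/c) * ρ.toFun ℓ := ρ.smul_eq _ _ (mem_B h𝔅 hℓ)
  have h4 : 0 ≤ ρ.toFun ℓ := ρ.pos _ (mem_B h𝔅 hℓ) h0
  have hd5 : 0 ≤ ρ.toFun d := ρ.pos _ (mem_B h𝔅 hdc) hd0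
  have h5 : (1/c) * ρ.toFun ℓ ≤ (muC ρ C).toReal := by
    have := ENNReal.toReal_mono (muC_lt_top h𝔅 ρ hC) h2
    rwa [ENNReal.toReal_ofReal hd5, h3] at this
  calc ρ.toFun ℓ = c * ((1/c) * ρ.toFun ℓ) := by field_simp
    _ ≤ c * (muC ρ C).toReal := by
        apply mul_le_mul_of_nonneg_left h5 hc.le

/-- Lower bound: `μ(C) ≤ ρ(χ)` when `χ = 1` on an open set around `C`. -/
lemma muC_le_rho {χ : X →ᵇ ℝ} {C U : Set X} (hC : IsCompact C) (hχ : χ ∈ CcS X)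
    (hχ0 : 0 ≤ χ) (hχ1 : χ ≤ 1) (hUo : IsOpen U) (hCU : C ⊆ U)
    (hU1 : ∀ x ∈ U, χ x = 1) : (muC ρ C).toReal ≤ ρ.toFun χ := by
  have h1 : muC ρ C ≤ ENNReal.ofReal (ρ.toFun χ) :=
    (muC_le_muO ρ hUo hCU).trans (muO_comparison h𝔅 ρ hχ hχ0 hχ1 hU1)
  have := ENNReal.toReal_mono ENNReal.ofReal_ne_top h1
  rwa [ENNReal.toReal_ofReal (ρ.pos _ (mem_B h𝔅 hχ) hχ0)] at this

end MuLC

section Layers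
variable {X : Type u} [TopologicalSpace X]

/-- The `k`-th layer function of `f` with step `c`: `min (max (f - kc) 0) c`. -/
noncomputable def layer (c : ℝ) (k : ℕ) (f : X →ᵇ ℝ) : X →ᵇ ℝ :=
  piece ((k : ℝ) * c) 1 c f

lemma layer_apply (c : ℝ) (k : ℕ) (f : X →ᵇ ℝ) (x : X) :
    layer c k f x = min (max (f x - (k : ℝ) * c) 0) c := by
  simp [layer]

lemma layer_pieceFun_zero {c : ℝ} (hc : 0 ≤ c) (k : ℕ) :
    pieceFun ((k : ℝ) * c) 1 c 0 = 0 := by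
  unfold pieceFun
  have h1 : (0 : ℝ) - (k : ℝ) * c ≤ 0 := by
    have : (0:ℝ) ≤ (k : ℝ) * c := by positivity
    linarith
  rw [mul_one, max_eq_right h1, min_eq_left hc]

lemma layer_mem_CcS {c : ℝ} (hc : 0 ≤ c) (k : ℕ) {f : X →ᵇ ℝ} (hf : f ∈ CcS X) :
    layer c k f ∈ CcS X :=
  piece_mem_CcS (layer_pieceFun_zero hc k) hf

lemma layer_nonneg {c : ℝ} (hc : 0 ≤ c) (k : ℕ) (f : X →ᵇ ℝ) : 0 ≤ layer c k f :=
  piece_nonneg hc _ _ f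

lemma layer_le {c : ℝ} (k : ℕ) (f : X →ᵇ ℝ) (x : X) : layer c k f x ≤ c :=
  piece_le _ _ _ f x

lemma tsupport_layer_subset {c : ℝ} (hc : 0 ≤ c) (k : ℕ) (f : X →ᵇ ℝ) :
    tsupport (layer c k f : X → ℝ) ⊆ tsupport (f : X → ℝ) :=
  piece_support_subset (layer_pieceFun_zero hc k) f

lemma tsupport_layer_subset_lvl {c : ℝ} (hc : 0 < c) (k : ℕ) (f : X →ᵇ ℝ) :
    tsupport (layer c k f : X → ℝ) ⊆ {x | (k : ℝ) * c ≤ f x} := by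
  have hcl : IsClosed {x | (k : ℝ) * c ≤ f x} :=
    isClosed_le continuous_const f.continuous
  apply closure_minimal ?_ hcl
  intro x hx
  simp only [Function.mem_support, layer_apply] at hx
  by_contra hlt
  simp only [mem_setOf_eq, not_le] at hlt
  apply hx
  rw [max_eq_right (by linarith), min_eq_left hc.le]

lemma isCompact_lvl {f : X →ᵇ ℝ} (hf : f ∈ CcS X) {s : ℝ} (hs : 0 < s) :
    IsCompact {x | s ≤ f x} := by
  apply IsCompact.of_isClosed_subset hf
    (isClosed_le continuous_const f.continuous)
  intro x hx
  apply subset_closure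
  simp only [Function.mem_support]
  intro h0
  rw [mem_setOf_eq, h0] at hx
  linarith

lemma sum_pieceFun {c : ℝ} (hc : 0 < c) (n : ℕ) {t : ℝ} (ht : 0 ≤ t)
    (htn : t ≤ (n : ℝ) * c) :
    ∑ k ∈ Finset.range n, pieceFun ((k : ℝ) * c) 1 c t = t := by
  have key : ∀ m : ℕ, ∑ k ∈ Finset.range m, pieceFun ((k : ℝ) * c) 1 c t
      = min t ((m : ℝ) * c) := by
    intro m
    induction m with
    | zero => simp [min_eq_right, ht]
    | succ l ih =>
      rw [Finset.sum_range_succ, ih]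
      unfold pieceFun
      push_cast
      rcases le_total t ((l : ℝ) * c) with h1 | h1
      · rw [min_eq_left h1, max_eq_right (by linarith), min_eq_left hc.le,
          min_eq_left (by nlinarith)]
        ring
      · rw [min_eq_right h1, mul_one]
        rcases le_total t ((l : ℝ) * c + c) with h2 | h2
        · rw [max_eq_left (by linarith), min_eq_left (by linarith),
            min_eq_left (by nlinarith)]
          ring
        · rw [max_eq_left (by linarith), min_eq_right (by linarith),
            min_eq_right (by nlinarith)]
          ring
  rw [key n, min_eq_left htn]

lemma layer_sum {c : ℝ} (hc : 0 < c) {n : ℕ} {f : X →ᵇ ℝ} (h0 : 0 ≤ f)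
    (hn : ‖f‖ ≤ (n : ℝ) * c) :
    ∑ k ∈ Finset.range n, layer c k f = f := by
  ext x
  have hx0 : 0 ≤ f x := h0 x
  have hxn : f x ≤ (n : ℝ) * c := by
    have := f.norm_coe_le_norm x
    rw [Real.norm_eq_abs, abs_le] at this
    linarith [this.2]
  have := sum_pieceFun hc n hx0 hxn
  calc (∑ k ∈ Finset.range n, layer c k f) x
      = ∑ k ∈ Finset.range n, layer c k f x := by
        simp
    _ = ∑ k ∈ Finset.range n, pieceFun ((k : ℝ) * c) 1 c (f x) := rfl
    _ = f x := this

variable {𝔅 : Set (X →ᵇ ℝ)} (h𝔅 : 𝔅 = CcS X ∨ 𝔅 = C0S X) (ρ : QLF 𝔅)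

include h𝔅

lemma layer_mem_sgen {c : ℝ} (hc : 0 < c) (k : ℕ) {f : X →ᵇ ℝ} (hf : f ∈ CcS X) :
    layer c k f ∈ sgen 𝔅 f := by
  apply comp_mem_sgen h𝔅 (mem_B h𝔅 hf) (mem_B h𝔅 (layer_mem_CcS hc.le k hf))
    ((pieceFun_lip _ _ _).continuous.continuousOn) (layer_pieceFun_zero hc.le k)
  intro x
  rfl

/-- Layer-cake decomposition of `ρ f`. -/
lemma rho_layer_decomp {c : ℝ} (hc : 0 < c) {n : ℕ} {f : X →ᵇ ℝ} (hf : f ∈ CcS X)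
    (h0 : 0 ≤ f) (hn : ‖f‖ ≤ (n : ℝ) * c) :
    ρ.toFun f = ∑ k ∈ Finset.range n, ρ.toFun (layer c k f) := by
  conv_lhs => rw [← layer_sum hc h0 hn]
  exact rho_sum_sgen h𝔅 ρ (mem_B h𝔅 hf) fun k _ => layer_mem_sgen h𝔅 hc k hf

end Layers

section Lower
variable {X : Type u} [TopologicalSpace X] [LocallyCompactSpace X] [T2Space X]
variable {𝔅 : Set (X →ᵇ ℝ)} (h𝔅 : 𝔅 = CcS X ∨ 𝔅 = C0S X) (ρ : QLF 𝔅)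

include h𝔅

/-- Lower bound for the `ρ`-value of a layer in terms of `μ` of the next level set. -/
lemma rho_layer_ge {g : X →ᵇ ℝ} (hg : g ∈ CcS X) (hg0 : 0 ≤ g) {c δ : ℝ}
    (hc : 0 < c) (hδ : 0 < δ) (hδc : 2 * δ < c) (k : ℕ) :
    (c - 2 * δ) * (muC ρ {x | ((k : ℝ) + 1) * c ≤ g x}).toReal
      ≤ ρ.toFun (layer c k g) := by
  have hk0 : (0:ℝ) ≤ (k : ℝ) := Nat.cast_nonneg k
  set a : ℝ := ((k : ℝ) + 1) * c - 2 * δ with ha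
  have hkc : c ≤ ((k : ℝ) + 1) * c := by nlinarith
  have hapos : 0 < a := by rw [ha]; linarith
  set χ : X →ᵇ ℝ := piece a (1/δ) 1 g with hχ
  have hχ0fun : pieceFun a (1/δ) 1 0 = 0 := by
    unfold pieceFun
    have h1 : (0 - a) * (1/δ) ≤ 0 := by
      apply mul_nonpos_of_nonpos_of_nonneg <;> [linarith; positivity]
    rw [max_eq_right h1, min_eq_left zero_le_one]
  have hχCcS : χ ∈ CcS X := piece_mem_CcS hχ0fun hg
  have hχ0 : 0 ≤ χ := piece_nonneg zero_le_one _ _ g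
  have hχ1 : χ ≤ 1 := fun x => piece_le _ _ _ g x
  have hCcomp : IsCompact {x | ((k : ℝ) + 1) * c ≤ g x} :=
    isCompact_lvl hg (by nlinarith)
  have hUo : IsOpen {x | ((k : ℝ) + 1) * c - δ < g x} :=
    isOpen_lt continuous_const g.continuous
  have hCU : {x | ((k : ℝ) + 1) * c ≤ g x} ⊆ {x | ((k : ℝ) + 1) * c - δ < g x} := by
    intro x hx
    simp only [mem_setOf_eq] at hx ⊢
    linarith
  have hU1 : ∀ x ∈ {x | ((k : ℝ) + 1) * c - δ < g x}, χ x = 1 := by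
    intro x hx
    simp only [mem_setOf_eq] at hx
    show pieceFun a (1/δ) 1 (g x) = 1
    unfold pieceFun
    have h1 : (1:ℝ) ≤ (g x - a) * (1/δ) := by
      rw [mul_one_div, le_div_iff₀ hδ, one_mul]
      rw [ha]
      linarith
    rw [max_eq_left (by linarith), min_eq_right h1]
  have step1 : (muC ρ {x | ((k : ℝ) + 1) * c ≤ g x}).toReal ≤ ρ.toFun χ :=
    muC_le_rho h𝔅 ρ hCcomp hχCcS hχ0 hχ1 hUo hCU hU1
  have hχsgen : χ ∈ sgen 𝔅 g :=
    comp_mem_sgen h𝔅 (mem_B h𝔅 hg) (mem_B h𝔅 hχCcS)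
      ((pieceFun_lip _ _ _).continuous.continuousOn) hχ0fun (fun x => rfl)
  have hlsgen : layer c k g ∈ sgen 𝔅 g := layer_mem_sgen h𝔅 hc k hg
  have hle : (c - 2*δ) • χ ≤ layer c k g := by
    intro x
    show (c - 2*δ) * χ x ≤ layer c k g x
    rcases le_or_gt (g x) a with h1 | h1
    · have hχx : χ x = 0 := by
        show pieceFun a (1/δ) 1 (g x) = 0
        unfold pieceFun
        have h2 : (g x - a) * (1/δ) ≤ 0 := by
          apply mul_nonpos_of_nonpos_of_nonneg <;> [linarith; positivity]
        rw [max_eq_right h2, min_eq_left zero_le_one]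
      rw [hχx, mul_zero]
      exact layer_nonneg hc.le k g x
    · have h2 : c - 2*δ ≤ layer c k g x := by
        rw [layer_apply]
        have h3 : c - 2*δ < g x - (k:ℝ)*c := by rw [ha] at h1; linarith
        rw [max_eq_left (by linarith)]
        rcases le_total (g x - (k:ℝ)*c) c with h4 | h4
        · rw [min_eq_left h4]; linarith
        · rw [min_eq_right h4]; linarith
      have h5 : χ x ≤ 1 := hχ1 x
      have h6 : 0 ≤ χ x := hχ0 x
      nlinarith
  have hmono : ρ.toFun ((c - 2*δ) • χ) ≤ ρ.toFun (layer c k g) :=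
    rho_mono_sgen h𝔅 ρ (mem_B h𝔅 hg) (sgen_smul _ hχsgen) hlsgen hle
  rw [ρ.smul_eq _ _ (mem_B h𝔅 hχCcS)] at hmono
  calc (c - 2*δ) * (muC ρ {x | ((k : ℝ) + 1) * c ≤ g x}).toReal
      ≤ (c - 2*δ) * ρ.toFun χ :=
        mul_le_mul_of_nonneg_left step1 (by linarith)
    _ ≤ ρ.toFun (layer c k g) := hmono

end Lower

section Core
set_option maxHeartbeats 1000000
variable {X : Type u} [TopologicalSpace X] [LocallyCompactSpace X] [T2Space X]
variable {𝔅 : Set (X →ᵇ ℝ)} (h𝔅 : 𝔅 = CcS X ∨ 𝔅 = C0S X) (ρ : QLF 𝔅)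

include h𝔅

/-- Core estimate: one-sided Lipschitz bound with respect to `muC` of a common
compact support. -/
lemma core_estimate {K : Set X} (hK : IsCompact K) {f g : X →ᵇ ℝ}
    (hf : f ∈ CcS X) (hg : g ∈ CcS X)
    (hsf : tsupport (f : X → ℝ) ⊆ K) (hsg : tsupport (g : X → ℝ) ⊆ K)
    (hf0 : 0 ≤ f) (hg0 : 0 ≤ g) :
    ρ.toFun f - ρ.toFun g ≤ ‖f - g‖ * (muC ρ K).toReal := by
  set c₀ : ℝ := ‖f - g‖ with hc₀def
  have hc₀ : 0 ≤ c₀ := norm_nonneg _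
  set μK : ℝ := (muC ρ K).toReal with hμKdef
  have hμK : 0 ≤ μK := ENNReal.toReal_nonneg
  set R : ℝ := ρ.toFun g with hRdef
  have hR : 0 ≤ R := ρ.pos _ (mem_B h𝔅 hg) hg0
  have hptwise : ∀ x, |f x - g x| ≤ c₀ := by
    intro x
    have := (f - g).norm_coe_le_norm x
    rwa [BoundedContinuousFunction.coe_sub, Pi.sub_apply, Real.norm_eq_abs] at this
  -- reduce to an ε-approximate statement
  have main : ∀ ε : ℝ, 0 < ε → ρ.toFun f ≤ R + c₀ * μK + ε := by
    intro ε hε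
    -- choose the step and smoothing parameters
    set c : ℝ := ε / (4 * (μK + 1)) with hcdef
    have hc : 0 < c := by positivity
    set δ : ℝ := c * min (1/4) (ε / (8 * (R + 1))) with hδdef
    have hmin1 : (0:ℝ) < min (1/4) (ε / (8 * (R + 1))) := by positivity
    have hδ : 0 < δ := by positivity
    have hδ4 : δ ≤ c / 4 := by
      rw [hδdef]
      calc c * min (1/4) (ε / (8 * (R + 1))) ≤ c * (1/4) :=
            mul_le_mul_of_nonneg_left (min_le_left _ _) hc.le
        _ = c / 4 := by ring
    have hδc : 2 * δ < c := by linarith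
    have hkey : 8 * δ * (R + 1) ≤ c * ε := by
      have h1 : min (1/4) (ε / (8 * (R + 1))) ≤ ε / (8 * (R + 1)) := min_le_right _ _
      have h2 : δ ≤ c * (ε / (8 * (R + 1))) :=
        mul_le_mul_of_nonneg_left h1 hc.le |>.trans_eq' (by rw [hδdef])
      have h3 : (0:ℝ) < 8 * (R + 1) := by linarith
      calc 8 * δ * (R + 1) ≤ 8 * (c * (ε / (8 * (R + 1)))) * (R + 1) := by nlinarith
        _ = c * ε := by field_simp
    -- the index bounds
    set s : ℕ := ⌈c₀ / c⌉₊ with hsdef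
    have hs1 : c₀ ≤ (s : ℝ) * c := by
      have h' : c₀ / c ≤ (s : ℝ) := Nat.le_ceil _
      calc c₀ = (c₀ / c) * c := by field_simp
        _ ≤ (s : ℝ) * c := mul_le_mul_of_nonneg_right h' hc.le
    have hs2 : (s : ℝ) * c ≤ c₀ + c := by
      have := Nat.ceil_lt_add_one (by positivity : (0:ℝ) ≤ c₀ / c)
      have h2 : (s : ℝ) < c₀ / c + 1 := this
      have h3 : (s : ℝ) * c < (c₀ / c + 1) * c := by
        exact mul_lt_mul_of_pos_right h2 hc
      calc (s:ℝ) * c ≤ (c₀ / c + 1) * c := h3.le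
        _ = c₀ + c := by field_simp
    set n : ℕ := s + 1 + (⌈‖f‖ / c⌉₊ + ⌈‖g‖ / c⌉₊) with hndef
    have hnf : ‖f‖ ≤ (n : ℝ) * c := by
      have h1 : ‖f‖ / c ≤ (⌈‖f‖ / c⌉₊ : ℝ) := Nat.le_ceil _
      have h2 : (⌈‖f‖ / c⌉₊ : ℝ) ≤ (n : ℝ) := by
        have : ⌈‖f‖ / c⌉₊ ≤ n := by rw [hndef]; omega
        exact_mod_cast this
      have h3 : ‖f‖ / c ≤ (n : ℝ) := h1.trans h2
      rw [div_le_iff₀ hc] at h3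
      linarith
    have hng : ‖g‖ ≤ (n : ℝ) * c := by
      have h1 : ‖g‖ / c ≤ (⌈‖g‖ / c⌉₊ : ℝ) := Nat.le_ceil _
      have h2 : (⌈‖g‖ / c⌉₊ : ℝ) ≤ (n : ℝ) := by
        have : ⌈‖g‖ / c⌉₊ ≤ n := by rw [hndef]; omega
        exact_mod_cast this
      have h3 : ‖g‖ / c ≤ (n : ℝ) := h1.trans h2
      rw [div_le_iff₀ hc] at h3
      linarith
    have hns : s + 1 ≤ n := by rw [hndef]; omega
    -- level set measures
    set m : ℕ → ℝ := fun j => (muC ρ {x | (j : ℝ) * c ≤ g x}).toReal with hmdef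
    have hm0 : ∀ j, 0 ≤ m j := fun j => ENNReal.toReal_nonneg
    -- upper bounds for the layers of f
    have hupper : ∀ k ∈ Finset.range n,
        ρ.toFun (layer c k f) ≤ if k ≤ s then c * μK else c * m (k - s) := by
      intro k _
      split_ifs with hks
      · exact rho_le_muC_mul h𝔅 ρ (layer_mem_CcS hc.le k hf) (layer_nonneg hc.le k f)
          hc (layer_le k f) hK ((tsupport_layer_subset hc.le k f).trans hsf)
      · push_neg at hks
        have hks' : s + 1 ≤ k := hks
        have hkpos : (1:ℝ) ≤ ((k - s : ℕ) : ℝ) := by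
          have : 1 ≤ k - s := by omega
          exact_mod_cast this
        have hlvlcomp : IsCompact {x | ((k - s : ℕ) : ℝ) * c ≤ g x} :=
          isCompact_lvl hg (by nlinarith)
        apply rho_le_muC_mul h𝔅 ρ (layer_mem_CcS hc.le k hf) (layer_nonneg hc.le k f)
          hc (layer_le k f) hlvlcomp
        refine (tsupport_layer_subset_lvl hc k f).trans ?_
        intro x hx
        simp only [mem_setOf_eq] at hx ⊢
        have h1 : |f x - g x| ≤ c₀ := hptwise x
        have h2 : ((k - s : ℕ) : ℝ) = (k : ℝ) - (s : ℝ) := by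
          rw [Nat.cast_sub (by omega)]
        rw [h2]
        rw [abs_le] at h1
        nlinarith [h1.1, h1.2]
    -- decomposition and upper bound for ρ f
    have hdecf : ρ.toFun f = ∑ k ∈ Finset.range n, ρ.toFun (layer c k f) :=
      rho_layer_decomp h𝔅 ρ hc hf hf0 hnf
    have hsumf : ρ.toFun f ≤
        ∑ k ∈ Finset.range n, (if k ≤ s then c * μK else c * m (k - s)) := by
      rw [hdecf]
      exact Finset.sum_le_sum hupper
    -- compute the upper sum
    set T : ℝ := ∑ j ∈ Finset.range (n - (s+1)), m (j + 1) with hTdef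
    have hT0 : 0 ≤ T := Finset.sum_nonneg fun j _ => hm0 _
    have hsplit : ∑ k ∈ Finset.range n, (if k ≤ s then c * μK else c * m (k - s))
        = (s + 1 : ℝ) * (c * μK) + c * T := by
      have e1 : ∑ k ∈ Finset.range (s+1), (if k ≤ s then c * μK else c * m (k - s))
          = (s + 1 : ℝ) * (c * μK) := by
        rw [Finset.sum_congr rfl (fun k hk =>
          if_pos (Nat.lt_succ_iff.mp (Finset.mem_range.mp hk)))]
        rw [Finset.sum_const, Finset.card_range, nsmul_eq_mul]
        push_cast
        ring
      have e2 : ∑ k ∈ Finset.Ico (s+1) n, (if k ≤ s then c * μK else c * m (k - s))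
          = c * T := by
        have e3 : ∑ k ∈ Finset.Ico (s+1) n, (if k ≤ s then c * μK else c * m (k - s))
            = ∑ k ∈ Finset.Ico (s+1) n, c * m (k - s) := by
          apply Finset.sum_congr rfl
          intro k hk
          rw [Finset.mem_Ico] at hk
          rw [if_neg (by omega)]
        rw [e3, Finset.sum_Ico_eq_sum_range, hTdef, Finset.mul_sum]
        apply Finset.sum_congr rfl
        intro j _
        congr 2
        omega
      calc ∑ k ∈ Finset.range n, (if k ≤ s then c * μK else c * m (k - s))
          = ∑ k ∈ Finset.Ico 0 (s+1), (if k ≤ s then c * μK else c * m (k - s))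
            + ∑ k ∈ Finset.Ico (s+1) n, (if k ≤ s then c * μK else c * m (k - s)) := by
            rw [Finset.range_eq_Ico, ← Finset.sum_Ico_consecutive _ (Nat.zero_le (s+1)) hns]
        _ = (s + 1 : ℝ) * (c * μK) + c * T := by
            rw [← Finset.range_eq_Ico] at *
            rw [e1, e2]
    -- lower bound for ρ g
    have hlower : ∀ k ∈ Finset.range n, (c - 2*δ) * m (k + 1) ≤ ρ.toFun (layer c k g) := by
      intro k _
      have := rho_layer_ge h𝔅 ρ hg hg0 hc hδ hδc k
      have hcast : ((k + 1 : ℕ) : ℝ) = (k : ℝ) + 1 := by push_cast; ring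
      rw [hmdef]
      simp only [hcast]
      exact this
    have hdecg : ρ.toFun g = ∑ k ∈ Finset.range n, ρ.toFun (layer c k g) :=
      rho_layer_decomp h𝔅 ρ hc hg hg0 hng
    have hsumg : (c - 2*δ) * (∑ k ∈ Finset.range n, m (k + 1)) ≤ R := by
      rw [hRdef, hdecg, Finset.mul_sum]
      exact Finset.sum_le_sum hlower
    have hTle : (c - 2*δ) * T ≤ R := by
      refine le_trans ?_ hsumg
      apply mul_le_mul_of_nonneg_left ?_ (by linarith)
      apply Finset.sum_le_sum_of_subset_of_nonneg
      · exact Finset.range_subset_range.mpr (Nat.sub_le _ _)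
      · intro j _ _; exact hm0 _
    -- final arithmetic
    have hcT : c * T ≤ R + ε / 2 := by
      have h2δT : 2 * δ * T ≤ ε / 2 := by
        have h1 : (c/2) * T ≤ R := by nlinarith
        have h2 : T ≤ 2 * R / c := by
          rw [le_div_iff₀ hc]; nlinarith
        have h3 : 2 * δ * T ≤ 4 * δ * R / c := by
          rw [le_div_iff₀ hc]
          calc 2 * δ * T * c = 2 * δ * c * T := by ring
            _ ≤ 2 * δ * c * (2 * R / c) := by
                apply mul_le_mul_of_nonneg_left h2 (by positivity)
            _ = 4 * δ * R := by field_simp; ring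
        have h4 : 4 * δ * R / c ≤ ε / 2 := by
          rw [div_le_iff₀ hc]
          nlinarith
        linarith
      nlinarith
    have hfirst : (s + 1 : ℝ) * (c * μK) ≤ c₀ * μK + ε / 2 := by
      have h1 : (s + 1 : ℝ) * c ≤ c₀ + 2 * c := by push_cast; linarith
      have h2 : (s + 1 : ℝ) * (c * μK) ≤ (c₀ + 2*c) * μK := by
        have := mul_le_mul_of_nonneg_right h1 hμK
        calc (s + 1 : ℝ) * (c * μK) = ((s+1:ℝ) * c) * μK := by ring
          _ ≤ (c₀ + 2*c) * μK := this
      have h3 : 2 * c * μK ≤ ε / 2 := by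
        have h4 : (0:ℝ) < μK + 1 := by linarith
        rw [hcdef]
        have h5 : 2 * (ε / (4 * (μK + 1))) * μK = (ε/2) * (μK/(μK+1)) := by
          field_simp
          ring
        rw [h5]
        calc (ε/2) * (μK/(μK+1)) ≤ (ε/2) * 1 := by
              apply mul_le_mul_of_nonneg_left ((div_le_one h4).mpr (by linarith)) (by positivity)
          _ = ε/2 := mul_one _
      nlinarith
    calc ρ.toFun f ≤ (s + 1 : ℝ) * (c * μK) + c * T := by rw [← hsplit]; exact hsumf
      _ ≤ (c₀ * μK + ε / 2) + (R + ε / 2) := add_le_add hfirst hcT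
      _ = R + c₀ * μK + ε := by ring
  -- conclude
  by_contra hcon
  push_neg at hcon
  have hgap : 0 < ρ.toFun f - R - c₀ * μK := by
    rw [hRdef]; linarith
  have := main ((ρ.toFun f - R - c₀ * μK) / 2) (by linarith)
  linarith

end Core

section PosNeg
variable {X : Type u} [TopologicalSpace X]

/-- Positive part of `f`, as an element of `C_c(X)`. -/
noncomputable def fplus (f : X →ᵇ ℝ) : X →ᵇ ℝ := piece 0 1 ‖f‖ f

/-- Negative part of `f`. -/
noncomputable def fminus (f : X →ᵇ ℝ) : X →ᵇ ℝ := piece 0 (-1) ‖f‖ f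

lemma fplus_pieceFun_zero (f : X →ᵇ ℝ) : pieceFun 0 1 ‖f‖ 0 = 0 := by
  unfold pieceFun
  rw [sub_zero, mul_one, max_eq_right le_rfl, min_eq_left (norm_nonneg f)]

lemma fminus_pieceFun_zero (f : X →ᵇ ℝ) : pieceFun 0 (-1) ‖f‖ 0 = 0 := by
  unfold pieceFun
  rw [sub_zero, zero_mul, max_eq_right le_rfl, min_eq_left (norm_nonneg f)]

lemma fplus_apply (f : X →ᵇ ℝ) (x : X) : fplus f x = max (f x) 0 := by
  have h1 : f x ≤ ‖f‖ := by
    have := f.norm_coe_le_norm x; rw [Real.norm_eq_abs, abs_le] at this; exact this.2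
  show pieceFun 0 1 ‖f‖ (f x) = max (f x) 0
  unfold pieceFun
  rw [sub_zero, mul_one, min_eq_left (max_le h1 (norm_nonneg f))]

lemma fminus_apply (f : X →ᵇ ℝ) (x : X) : fminus f x = max (-(f x)) 0 := by
  have h1 : -(f x) ≤ ‖f‖ := by
    have := f.norm_coe_le_norm x; rw [Real.norm_eq_abs, abs_le] at this; linarith [this.1]
  show pieceFun 0 (-1) ‖f‖ (f x) = max (-(f x)) 0
  unfold pieceFun
  rw [sub_zero, mul_neg_one, min_eq_left (max_le h1 (norm_nonneg f))]

lemma fplus_mem_CcS {f : X →ᵇ ℝ} (hf : f ∈ CcS X) : fplus f ∈ CcS X :=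
  piece_mem_CcS (fplus_pieceFun_zero f) hf

lemma fminus_mem_CcS {f : X →ᵇ ℝ} (hf : f ∈ CcS X) : fminus f ∈ CcS X :=
  piece_mem_CcS (fminus_pieceFun_zero f) hf

lemma fplus_nonneg (f : X →ᵇ ℝ) : 0 ≤ fplus f := piece_nonneg (norm_nonneg f) _ _ f

lemma fminus_nonneg (f : X →ᵇ ℝ) : 0 ≤ fminus f := piece_nonneg (norm_nonneg f) _ _ f

lemma fplus_le (f : X →ᵇ ℝ) (x : X) : fplus f x ≤ ‖f‖ := piece_le _ _ _ f x

lemma fminus_le (f : X →ᵇ ℝ) (x : X) : fminus f x ≤ ‖f‖ := piece_le _ _ _ f x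

lemma fplus_tsupport (f : X →ᵇ ℝ) :
    tsupport (fplus f : X → ℝ) ⊆ tsupport (f : X → ℝ) :=
  piece_support_subset (fplus_pieceFun_zero f) f

lemma fminus_tsupport (f : X →ᵇ ℝ) :
    tsupport (fminus f : X → ℝ) ⊆ tsupport (f : X → ℝ) :=
  piece_support_subset (fminus_pieceFun_zero f) f

lemma fplus_sub_fminus (f : X →ᵇ ℝ) : fplus f - fminus f = f := by
  ext x
  simp only [BoundedContinuousFunction.coe_sub, Pi.sub_apply, fplus_apply, fminus_apply]
  rcases le_total (f x) 0 with h | h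
  · rw [max_eq_right h, max_eq_left (by linarith)]; ring
  · rw [max_eq_left h, max_eq_right (by linarith)]; ring

lemma fplus_sub_norm (f g : X →ᵇ ℝ) : ‖fplus f - fplus g‖ ≤ ‖f - g‖ := by
  rw [BoundedContinuousFunction.norm_le (norm_nonneg _)]
  intro x
  simp only [BoundedContinuousFunction.coe_sub, Pi.sub_apply, fplus_apply, Real.norm_eq_abs]
  have h1 : |f x - g x| ≤ ‖f - g‖ := by
    have := (f - g).norm_coe_le_norm x
    rwa [BoundedContinuousFunction.coe_sub, Pi.sub_apply, Real.norm_eq_abs] at this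
  calc |max (f x) 0 - max (g x) 0| ≤ |f x - g x| := abs_max_sub_max_le_abs _ _ _
    _ ≤ ‖f - g‖ := h1

lemma fminus_sub_norm (f g : X →ᵇ ℝ) : ‖fminus f - fminus g‖ ≤ ‖f - g‖ := by
  rw [BoundedContinuousFunction.norm_le (norm_nonneg _)]
  intro x
  simp only [BoundedContinuousFunction.coe_sub, Pi.sub_apply, fminus_apply, Real.norm_eq_abs]
  have h1 : |f x - g x| ≤ ‖f - g‖ := by
    have := (f - g).norm_coe_le_norm x
    rwa [BoundedContinuousFunction.coe_sub, Pi.sub_apply, Real.norm_eq_abs] at this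
  calc |max (-f x) 0 - max (-g x) 0| ≤ |(-f x) - (-g x)| := abs_max_sub_max_le_abs _ _ _
    _ = |g x - f x| := by ring_nf
    _ ≤ ‖f - g‖ := by rwa [abs_sub_comm]

variable {𝔅 : Set (X →ᵇ ℝ)} (h𝔅 : 𝔅 = CcS X ∨ 𝔅 = C0S X) (ρ : QLF 𝔅)

include h𝔅

lemma fplus_mem_sgen {f : X →ᵇ ℝ} (hf : f ∈ CcS X) : fplus f ∈ sgen 𝔅 f :=
  comp_mem_sgen h𝔅 (mem_B h𝔅 hf) (mem_B h𝔅 (fplus_mem_CcS hf))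
    ((pieceFun_lip _ _ _).continuous.continuousOn) (fplus_pieceFun_zero f) (fun _ => rfl)

lemma fminus_mem_sgen {f : X →ᵇ ℝ} (hf : f ∈ CcS X) : fminus f ∈ sgen 𝔅 f :=
  comp_mem_sgen h𝔅 (mem_B h𝔅 hf) (mem_B h𝔅 (fminus_mem_CcS hf))
    ((pieceFun_lip _ _ _).continuous.continuousOn) (fminus_pieceFun_zero f) (fun _ => rfl)

lemma rho_split {f : X →ᵇ ℝ} (hf : f ∈ CcS X) :
    ρ.toFun f = ρ.toFun (fplus f) - ρ.toFun (fminus f) := by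
  have h1 : fplus f + (-1 : ℝ) • fminus f = f := by
    have := fplus_sub_fminus f
    ext x
    have hx := congrArg (fun u : X →ᵇ ℝ => u x) this
    simp only [BoundedContinuousFunction.coe_sub, Pi.sub_apply] at hx
    show fplus f x + (-1 : ℝ) * fminus f x = f x
    linarith
  have h2 := ρ.add_eq f (mem_B h𝔅 hf) (fplus f) ((-1 : ℝ) • fminus f)
    (fplus_mem_sgen h𝔅 hf) (sgen_smul _ (fminus_mem_sgen h𝔅 hf))
  rw [h1] at h2
  rw [h2, ρ.smul_eq _ _ (mem_B h𝔅 (fminus_mem_CcS hf))]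
  ring

end PosNeg

section Parts
variable {X : Type u} [TopologicalSpace X] [LocallyCompactSpace X] [T2Space X]
variable {𝔅 : Set (X →ᵇ ℝ)} (h𝔅 : 𝔅 = CcS X ∨ 𝔅 = C0S X) (ρ : QLF 𝔅)

include h𝔅

lemma muR_compact_ne_top {K : Set X} (hK : IsCompact K) : muR ρ K ≠ ∞ := by
  rw [muR]
  split_ifs with ho
  · exact muO_lt_top h𝔅 ρ (by rwa [hK.isClosed.closure_eq])
  · exact muC_lt_top h𝔅 ρ hK

lemma muC_toReal_le_muR {K : Set X} (hK : IsCompact K) :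
    (muC ρ K).toReal ≤ (muR ρ K).toReal := by
  apply ENNReal.toReal_mono (muR_compact_ne_top h𝔅 ρ hK)
  rw [muR]
  split_ifs with ho
  · exact muC_le_muO ρ ho Subset.rfl
  · exact le_rfl

omit h𝔅
lemma muR_univ_eq : muR ρ univ = muO ρ univ := if_pos isOpen_univ

lemma muC_toReal_le_muOuniv {K : Set X} (hfin : muO ρ univ ≠ ∞) :
    (muC ρ K).toReal ≤ (muO ρ univ).toReal :=
  ENNReal.toReal_mono hfin (muC_le_muO ρ isOpen_univ (subset_univ K))
include h𝔅

/-- Two-sided version of the core estimate (with `muC`). -/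
lemma core_abs {K : Set X} (hK : IsCompact K) {f g : X →ᵇ ℝ}
    (hf : f ∈ CcS X) (hg : g ∈ CcS X)
    (hsf : tsupport (f : X → ℝ) ⊆ K) (hsg : tsupport (g : X → ℝ) ⊆ K)
    (hf0 : 0 ≤ f) (hg0 : 0 ≤ g) :
    |ρ.toFun f - ρ.toFun g| ≤ ‖f - g‖ * (muC ρ K).toReal := by
  rw [abs_sub_le_iff]
  constructor
  · exact core_estimate h𝔅 ρ hK hf hg hsf hsg hf0 hg0
  · have := core_estimate h𝔅 ρ hK hg hf hsg hsf hg0 hf0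
    rwa [norm_sub_rev] at this

/-- General two-sided estimate with constant 2 (with `muC`). -/
lemma core_abs2 {K : Set X} (hK : IsCompact K) {f g : X →ᵇ ℝ}
    (hf : f ∈ CcS X) (hg : g ∈ CcS X)
    (hsf : tsupport (f : X → ℝ) ⊆ K) (hsg : tsupport (g : X → ℝ) ⊆ K) :
    |ρ.toFun f - ρ.toFun g| ≤ 2 * ‖f - g‖ * (muC ρ K).toReal := by
  rw [rho_split h𝔅 ρ hf, rho_split h𝔅 ρ hg]
  have h1 : |ρ.toFun (fplus f) - ρ.toFun (fplus g)| ≤ ‖f - g‖ * (muC ρ K).toReal := by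
    refine le_trans (core_abs h𝔅 ρ hK (fplus_mem_CcS hf) (fplus_mem_CcS hg)
      ((fplus_tsupport f).trans hsf) ((fplus_tsupport g).trans hsg)
      (fplus_nonneg f) (fplus_nonneg g)) ?_
    exact mul_le_mul_of_nonneg_right (fplus_sub_norm f g) ENNReal.toReal_nonneg
  have h2 : |ρ.toFun (fminus f) - ρ.toFun (fminus g)| ≤ ‖f - g‖ * (muC ρ K).toReal := by
    refine le_trans (core_abs h𝔅 ρ hK (fminus_mem_CcS hf) (fminus_mem_CcS hg)
      ((fminus_tsupport f).trans hsf) ((fminus_tsupport g).trans hsg)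
      (fminus_nonneg f) (fminus_nonneg g)) ?_
    exact mul_le_mul_of_nonneg_right (fminus_sub_norm f g) ENNReal.toReal_nonneg
  calc |ρ.toFun (fplus f) - ρ.toFun (fminus f) - (ρ.toFun (fplus g) - ρ.toFun (fminus g))|
      = |(ρ.toFun (fplus f) - ρ.toFun (fplus g)) - (ρ.toFun (fminus f) - ρ.toFun (fminus g))| := by
        ring_nf
    _ ≤ |ρ.toFun (fplus f) - ρ.toFun (fplus g)| + |ρ.toFun (fminus f) - ρ.toFun (fminus g)| :=
        abs_sub _ _
    _ ≤ 2 * ‖f - g‖ * (muC ρ K).toReal := by linarith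

/-- Part (iii) with `muC`. -/
lemma core_abs_single {f : X →ᵇ ℝ} (hf : f ∈ CcS X) :
    |ρ.toFun f| ≤ ‖f‖ * (muC ρ (tsupport (f : X → ℝ))).toReal := by
  rcases eq_or_ne ‖f‖ 0 with h0 | h0
  · have hf0 : f = 0 := norm_eq_zero.mp h0
    rw [hf0, rho_zero h𝔅 ρ, abs_zero]
    positivity
  · have hnorm : 0 < ‖f‖ := lt_of_le_of_ne (norm_nonneg f) (Ne.symm h0)
    rw [rho_split h𝔅 ρ hf]
    have hp : ρ.toFun (fplus f) ≤ ‖f‖ * (muC ρ (tsupport (f : X → ℝ))).toReal :=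
      rho_le_muC_mul h𝔅 ρ (fplus_mem_CcS hf) (fplus_nonneg f) hnorm (fplus_le f)
        hf (fplus_tsupport f)
    have hm : ρ.toFun (fminus f) ≤ ‖f‖ * (muC ρ (tsupport (f : X → ℝ))).toReal :=
      rho_le_muC_mul h𝔅 ρ (fminus_mem_CcS hf) (fminus_nonneg f) hnorm (fminus_le f)
        hf (fminus_tsupport f)
    have hp0 : 0 ≤ ρ.toFun (fplus f) :=
      ρ.pos _ (mem_B h𝔅 (fplus_mem_CcS hf)) (fplus_nonneg f)
    have hm0 : 0 ≤ ρ.toFun (fminus f) :=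
      ρ.pos _ (mem_B h𝔅 (fminus_mem_CcS hf)) (fminus_nonneg f)
    rw [abs_le]
    constructor <;> linarith

end Parts


/-- continuity estimates for a quasi-linear functional `ρ` on `C_c(X)` (or
`C₀(X)`) in terms of the associated topological measure `μ = μ_ρ`: Lipschitz bounds on
functions supported in a compact `K`, continuity with respect to uniform convergence on
compact sets, and — when `μ(X) < ∞` — global bounds and uniform continuity. -/
theorem qlf_continuity_estimates {X : Type u} [TopologicalSpace X]
    [LocallyCompactSpace X] [T2Space X] [ConnectedSpace X]
    (𝔅 : Set (X →ᵇ ℝ)) (h𝔅 : 𝔅 = CcS X ∨ 𝔅 = C0S X) (ρ : QLF 𝔅) :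
    (∀ (K : Set X) (f g : X →ᵇ ℝ), IsCompact K → f ∈ CcS X → g ∈ CcS X →
      tsupport (f : X → ℝ) ⊆ K → tsupport (g : X → ℝ) ⊆ K → 0 ≤ f → 0 ≤ g →
      |ρ.toFun f - ρ.toFun g| ≤ ‖f - g‖ * (muR ρ K).toReal) ∧
    (∀ (K : Set X) (f g : X →ᵇ ℝ), IsCompact K → f ∈ CcS X → g ∈ CcS X →
      tsupport (f : X → ℝ) ⊆ K → tsupport (g : X → ℝ) ⊆ K →
      |ρ.toFun f - ρ.toFun g| ≤ 2 * ‖f - g‖ * (muR ρ K).toReal) ∧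
    (∀ f : X →ᵇ ℝ, f ∈ CcS X →
      |ρ.toFun f| ≤ ‖f‖ * (muR ρ (tsupport (f : X → ℝ))).toReal) ∧
    (∀ (K : Set X), IsCompact K → ∀ (F : ℕ → X →ᵇ ℝ) (f : X →ᵇ ℝ),
      (∀ n, F n ∈ CcS X) → f ∈ CcS X → (∀ n, tsupport ((F n : X → ℝ)) ⊆ K) →
      tsupport (f : X → ℝ) ⊆ K →
      Tendsto (fun n => ‖F n - f‖) atTop (nhds 0) →
      Tendsto (fun n => ρ.toFun (F n)) atTop (nhds (ρ.toFun f))) ∧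
    (muR ρ Set.univ ≠ ∞ →
      ((∀ f : X →ᵇ ℝ, f ∈ CcS X → |ρ.toFun f| ≤ ‖f‖ * (muR ρ Set.univ).toReal) ∧
       (∀ f g : X →ᵇ ℝ, f ∈ CcS X → g ∈ CcS X → 0 ≤ f → 0 ≤ g →
         |ρ.toFun f - ρ.toFun g| ≤ ‖f - g‖ * (muR ρ Set.univ).toReal) ∧
       (∀ f g : X →ᵇ ℝ, f ∈ CcS X → g ∈ CcS X →
         |ρ.toFun f - ρ.toFun g| ≤ 2 * ‖f - g‖ * (muR ρ Set.univ).toReal) ∧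
       (∀ ε : ℝ, 0 < ε → ∃ δ : ℝ, 0 < δ ∧ ∀ f g : X →ᵇ ℝ, f ∈ CcS X → g ∈ CcS X →
         ‖f - g‖ < δ → |ρ.toFun f - ρ.toFun g| < ε))) := by
  refine ⟨?_, ?_, ?_, ?_, ?_⟩
  · intro K f g hK hf hg hsf hsg hf0 hg0
    refine (core_abs h𝔅 ρ hK hf hg hsf hsg hf0 hg0).trans ?_
    exact mul_le_mul_of_nonneg_left (muC_toReal_le_muR h𝔅 ρ hK) (norm_nonneg _)
  · intro K f g hK hf hg hsf hsg
    refine (core_abs2 h𝔅 ρ hK hf hg hsf hsg).trans ?_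
    exact mul_le_mul_of_nonneg_left (muC_toReal_le_muR h𝔅 ρ hK) (by positivity)
  · intro f hf
    refine (core_abs_single h𝔅 ρ hf).trans ?_
    exact mul_le_mul_of_nonneg_left (muC_toReal_le_muR h𝔅 ρ hf) (norm_nonneg f)
  · intro K hK F f hF hf hsF hsf hnorm
    rw [tendsto_iff_dist_tendsto_zero]
    have hb : ∀ n, dist (ρ.toFun (F n)) (ρ.toFun f)
        ≤ 2 * (muR ρ K).toReal * ‖F n - f‖ := by
      intro n
      rw [Real.dist_eq]
      refine le_trans ((core_abs2 h𝔅 ρ hK (hF n) hf (hsF n) hsf).trans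
        (mul_le_mul_of_nonneg_left (muC_toReal_le_muR h𝔅 ρ hK) (by positivity))) ?_
      ring_nf
      exact le_rfl
    apply squeeze_zero (fun n => dist_nonneg) hb
    simpa using hnorm.const_mul (2 * (muR ρ K).toReal)
  · intro hfin
    have hfin' : muO ρ univ ≠ ∞ := by rwa [muR_univ_eq] at hfin
    have key1 : ∀ f : X →ᵇ ℝ, f ∈ CcS X →
        |ρ.toFun f| ≤ ‖f‖ * (muR ρ Set.univ).toReal := by
      intro f hf
      refine (core_abs_single h𝔅 ρ hf).trans ?_
      rw [muR_univ_eq]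
      exact mul_le_mul_of_nonneg_left (muC_toReal_le_muOuniv ρ hfin') (norm_nonneg f)
    have key2 : ∀ f g : X →ᵇ ℝ, f ∈ CcS X → g ∈ CcS X → 0 ≤ f → 0 ≤ g →
        |ρ.toFun f - ρ.toFun g| ≤ ‖f - g‖ * (muR ρ Set.univ).toReal := by
      intro f g hf hg hf0 hg0
      have hK : IsCompact (tsupport (f : X → ℝ) ∪ tsupport (g : X → ℝ)) := hf.union hg
      refine (core_abs h𝔅 ρ hK hf hg subset_union_left subset_union_right hf0 hg0).trans ?_
      rw [muR_univ_eq]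
      exact mul_le_mul_of_nonneg_left (muC_toReal_le_muOuniv ρ hfin') (norm_nonneg _)
    have key3 : ∀ f g : X →ᵇ ℝ, f ∈ CcS X → g ∈ CcS X →
        |ρ.toFun f - ρ.toFun g| ≤ 2 * ‖f - g‖ * (muR ρ Set.univ).toReal := by
      intro f g hf hg
      have hK : IsCompact (tsupport (f : X → ℝ) ∪ tsupport (g : X → ℝ)) := hf.union hg
      refine (core_abs2 h𝔅 ρ hK hf hg subset_union_left subset_union_right).trans ?_
      rw [muR_univ_eq]
      exact mul_le_mul_of_nonneg_left (muC_toReal_le_muOuniv ρ hfin') (by positivity)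
    refine ⟨key1, key2, key3, ?_⟩
    intro ε hε
    set μ : ℝ := (muR ρ Set.univ).toReal with hμdef
    have hμ0 : 0 ≤ μ := ENNReal.toReal_nonneg
    refine ⟨ε / (2 * μ + 1), by positivity, ?_⟩
    intro f g hf hg hlt
    calc |ρ.toFun f - ρ.toFun g| ≤ 2 * ‖f - g‖ * μ := key3 f g hf hg
      _ ≤ (2 * μ + 1) * ‖f - g‖ := by nlinarith [norm_nonneg (f - g)]
      _ < (2 * μ + 1) * (ε / (2 * μ + 1)) := by
          apply mul_lt_mul_of_pos_left hlt (by linarith)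
      _ = ε := by field_simp
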